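/- Let n, m, k be positive integers with n dividing m. If (τ^n − 1) divides a product of cyclotomic polynomials h(τ), then (τ^{n/gcd(n,k)} − 1)^{gcd(n,k)} divides h^{(k)}(τ), and consequently (τ^n − 1) divides h^{(k)}(τ^{m+k}). -/

import Mathlib

open Polynomial

/-- For a polynomial `h(τ) = ∏ (τ - ζⱼ)` (split over `ℂ`), the polynomial
`h^{(k)}(τ) = ∏ (τ - ζⱼᵏ)` obtained by raising every root to the `k`-th power. -/
noncomputable def powRoots (k : ℕ) (h : Polynomial ℂ) : Polynomial ℂ :=
  (h.roots.map fun z => X - C (z ^ k)).prod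

private lemma range_map_pow_periodic (η : ℂ) (p : ℕ) (hη : η ^ p = 1) : ∀ g : ℕ,
    (Multiset.range (g * p)).map (η ^ ·) = g • (Multiset.range p).map (η ^ ·)
  | 0 => by simp
  | (g + 1) => by
    rw [add_mul, one_mul, Multiset.range_add, Multiset.map_add, Multiset.map_map,
      succ_nsmul, range_map_pow_periodic η p hη g]
    congr 1
    apply Multiset.map_congr rfl
    intro j _
    simp only [Function.comp_apply]
    rw [pow_add, mul_comm g p, pow_mul, hη, one_pow, one_mul]

private lemma key_multiset (ζ : ℂ) (n k : ℕ) (hn : 0 < n) (hk : 0 < k)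
    (hζ : IsPrimitiveRoot ζ n) :
    (nthRoots n (1 : ℂ)).map (· ^ k) =
      Nat.gcd n k • nthRoots (n / Nat.gcd n k) (1 : ℂ) := by
  set g := Nat.gcd n k with hg
  set p := n / g with hp
  have hgpos : 0 < g := Nat.gcd_pos_of_pos_left k hn
  have hnp : g * p = n := Nat.mul_div_cancel' (Nat.gcd_dvd_left n k)
  have horder : orderOf (ζ ^ k) = p := by
    rw [orderOf_pow' ζ hk.ne', ← hζ.eq_orderOf]
  have hη : IsPrimitiveRoot (ζ ^ k) p := horder ▸ IsPrimitiveRoot.orderOf (ζ ^ k)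
  have hηp : (ζ ^ k) ^ p = 1 := hη.pow_eq_one
  rw [hζ.nthRoots_eq (one_pow n), hη.nthRoots_eq (one_pow p), Multiset.map_map]
  have h1 : ((· ^ k) ∘ fun x => ζ ^ x * 1) = fun i => (ζ ^ k) ^ i := by
    funext i
    simp only [Function.comp_apply, mul_one]
    rw [← pow_mul, ← pow_mul, mul_comm]
  have h2 : (fun x => (ζ ^ k) ^ x * 1) = fun j => (ζ ^ k) ^ j := by funext j; rw [mul_one]
  rw [h1, h2, ← hnp, range_map_pow_periodic (ζ ^ k) p hηp g]

/-- If `n ∣ m` and `τ^n − 1` divides a product of cyclotomic polynomials `h`, then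
`(τ^{n/gcd(n,k)} − 1)^{gcd(n,k)}` divides `h^{(k)}(τ)`, and consequently `τ^n − 1`
divides `h^{(k)}(τ^{m+k})`. -/
theorem pow_sub_one_dvd_powRoots (h : Polynomial ℂ) (s : Multiset ℕ)
    (hs : ∀ a ∈ s, 0 < a) (hh : h = (s.map fun a => cyclotomic a ℂ).prod)
    (n m k : ℕ) (hn : 0 < n) (hm : 0 < m) (hk : 0 < k) (hnm : n ∣ m)
    (hdvd : (X ^ n - 1 : Polynomial ℂ) ∣ h) :
    ((X ^ (n / Nat.gcd n k) - 1 : Polynomial ℂ) ^ (Nat.gcd n k) ∣ powRoots k h) ∧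
      (X ^ n - 1 : Polynomial ℂ) ∣ (powRoots k h).comp (X ^ (m + k)) := by
  set g := Nat.gcd n k with hg
  set p := n / g with hp
  have hgpos : 0 < g := Nat.gcd_pos_of_pos_left k hn
  have hnp : g * p = n := Nat.mul_div_cancel' (Nat.gcd_dvd_left n k)
  have hppos : 0 < p := Nat.div_pos (Nat.le_of_dvd hn (Nat.gcd_dvd_left n k)) hgpos
  have hmono : h.Monic := by
    rw [hh]
    apply monic_multiset_prod_of_monic
    intro a _
    exact cyclotomic.monic _ _
  have hne : h ≠ 0 := hmono.ne_zero
  have hroots_eq : (X ^ n - 1 : Polynomial ℂ).roots = nthRoots n 1 := by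
    rw [nthRoots, map_one]
  have hle : nthRoots n (1 : ℂ) ≤ h.roots := by
    rw [← hroots_eq]
    exact Polynomial.roots.le_of_dvd hne hdvd
  have hζ := Complex.isPrimitiveRoot_exp n hn.ne'
  have hkey := key_multiset _ n k hn hk hζ
  have hpr : powRoots k h = ((h.roots.map (· ^ k)).map fun w => X - C w).prod := by
    rw [powRoots, Multiset.map_map]
    rfl
  have hXp : (X ^ p - 1 : Polynomial ℂ) = ((nthRoots p (1 : ℂ)).map fun w => X - C w).prod := by
    have hmon : (X ^ p - 1 : Polynomial ℂ).Monic := by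
      simpa using monic_X_pow_sub_C (1 : ℂ) hppos.ne'
    have heq := Splits.eq_prod_roots_of_monic
      (IsAlgClosed.splits (X ^ p - 1 : Polynomial ℂ)) hmon
    have : (X ^ p - 1 : Polynomial ℂ).roots = nthRoots p 1 := by rw [nthRoots, map_one]
    rwa [this] at heq
  have first : (X ^ p - 1 : Polynomial ℂ) ^ g ∣ powRoots k h := by
    rw [hXp, ← Multiset.prod_nsmul, ← Multiset.map_nsmul, ← hkey, hpr]
    exact Multiset.prod_dvd_prod_of_le (Multiset.map_le_map (Multiset.map_le_map hle))
  refine ⟨first, ?_⟩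
  obtain ⟨c, hc⟩ := first
  rw [hc, mul_comp]
  apply Dvd.dvd.mul_right
  rw [pow_comp, sub_comp, pow_comp, X_comp, one_comp, ← pow_mul]
  have hdvdN : n ∣ (m + k) * p := by
    rw [add_mul]
    apply Nat.dvd_add
    · exact Dvd.dvd.mul_right hnm p
    · obtain ⟨c', hcg⟩ := Nat.gcd_dvd_right n k
      rw [← hg] at hcg
      exact ⟨c', by rw [hcg, mul_right_comm, hnp]⟩
  obtain ⟨t, ht⟩ := hdvdN
  have hbase : (X ^ n - 1 : Polynomial ℂ) ∣ X ^ ((m + k) * p) - 1 := by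
    rw [ht, pow_mul]
    simpa using sub_dvd_pow_sub_pow ((X : Polynomial ℂ) ^ n) 1 t
  exact dvd_pow hbase hgpos.ne'
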